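/- Suppose R : R → SO(3) satisfies Ṙ = R Ω̂ for a curve Ω : R → R^3, r, v ∈ S^2, α > 0, θ ∈ (0, π/2), and r^T R(t)^T v < cos θ along the trajectory. Let B(t) = 1 − (1/α) ln((cos θ − r^T R^T v)/(1 + cos θ)). Then dB/dt = e_{R_B} · Ω, where e_{R_B} = ((R^T v) × r)/(α (r^T R^T v − cos θ)). -/

import Mathlib

open Matrix

noncomputable section

attribute [local instance] Matrix.frobeniusNormedAddCommGroup Matrix.frobeniusNormedSpace

/-- The hat map sending `x ∈ ℝ³` to the skew-symmetric matrix `x̂` with `x̂ y = x × y`. -/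
def hat (x : Fin 3 → ℝ) : Matrix (Fin 3) (Fin 3) ℝ :=
  !![0, -x 2, x 1; x 2, 0, -x 0; -x 1, x 0, 0]

/-- The vee map, inverse of the hat map on skew-symmetric matrices. -/
def vee (A : Matrix (Fin 3) (Fin 3) ℝ) : Fin 3 → ℝ :=
  ![A 2 1, A 0 2, A 1 0]

/-- the linear functional `M ↦ r ⬝ᵥ (Mᵀ *ᵥ v)`. -/
def Lfun (r v : Fin 3 → ℝ) : Matrix (Fin 3) (Fin 3) ℝ →ₗ[ℝ] ℝ where
  toFun M := r ⬝ᵥ (Mᵀ *ᵥ v)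
  map_add' M N := by simp [Matrix.transpose_add, Matrix.add_mulVec, dotProduct_add]
  map_smul' c M := by simp [Matrix.transpose_smul, Matrix.smul_mulVec, dotProduct_smul]

theorem deriv_B (r v : Fin 3 → ℝ) (hr : r ⬝ᵥ r = 1) (hv : v ⬝ᵥ v = 1)
    (α θ : ℝ) (hα : 0 < α) (hθ : θ ∈ Set.Ioo 0 (Real.pi / 2))
    (R : ℝ → Matrix (Fin 3) (Fin 3) ℝ) (Ω : ℝ → Fin 3 → ℝ)
    (hSO : ∀ t, (R t)ᵀ * R t = 1 ∧ (R t).det = 1)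
    (hkin : ∀ t, HasDerivAt R (R t * hat (Ω t)) t)
    (hcon : ∀ t, r ⬝ᵥ ((R t)ᵀ *ᵥ v) < Real.cos θ) (t : ℝ) :
    HasDerivAt
      (fun s => 1 - (1 / α) * Real.log
        ((Real.cos θ - r ⬝ᵥ ((R s)ᵀ *ᵥ v)) / (1 + Real.cos θ)))
      (((1 / (α * (r ⬝ᵥ ((R t)ᵀ *ᵥ v) - Real.cos θ))) •
        crossProduct ((R t)ᵀ *ᵥ v) r) ⬝ᵥ Ω t) t := by
  set f : ℝ → ℝ := fun s => r ⬝ᵥ ((R s)ᵀ *ᵥ v) with hf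
  have hL : ∀ s, f s = Lfun r v (R s) := fun s => rfl
  have hf' : HasDerivAt f (Lfun r v (R t * hat (Ω t))) t := by
    exact
      ((Lfun r v).toContinuousLinearMap.hasFDerivAt.comp_hasDerivAt t (hkin t))
  have hval : Lfun r v (R t * hat (Ω t)) = -((crossProduct ((R t)ᵀ *ᵥ v) r) ⬝ᵥ Ω t) := by
    simp only [Lfun, LinearMap.coe_mk, AddHom.coe_mk, cross_apply, hat,
      Matrix.mulVec, Matrix.transpose_apply, dotProduct, Fin.sum_univ_three,
      Matrix.mul_apply, Matrix.cons_val_zero, Matrix.cons_val_one, Matrix.head_cons,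
      Matrix.cons_val_two, Matrix.tail_cons, Matrix.head_fin_const,
      Matrix.of_apply, Matrix.cons_val', Matrix.empty_val', Matrix.cons_val_fin_one]
    ring
  have hpos : 0 < Real.cos θ - f t := by have := hcon t; linarith
  have h1c : 0 < 1 + Real.cos θ := by
    have : 0 < Real.cos θ := Real.cos_pos_of_mem_Ioo
      ⟨by linarith [hθ.1, Real.pi_pos], hθ.2⟩
    linarith
  have hne : (Real.cos θ - f t) / (1 + Real.cos θ) ≠ 0 :=
    ne_of_gt (div_pos hpos h1c)
  set c : ℝ := (crossProduct ((R t)ᵀ *ᵥ v) r) ⬝ᵥ Ω t with hc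
  have hg : HasDerivAt (fun s => (Real.cos θ - f s) / (1 + Real.cos θ))
      ((0 - (-c)) / (1 + Real.cos θ)) t := by
    exact ((hasDerivAt_const t (Real.cos θ)).sub (hval ▸ hf')).div_const _
  have hlog := (Real.hasDerivAt_log hne).comp t hg
  have hfinal := ((hlog.const_mul (1/α)).const_sub 1)
  convert hfinal using 1
  · rfl
  · rfl
  · rfl
  have hd : r ⬝ᵥ ((R t)ᵀ *ᵥ v) = f t := rfl
  rw [smul_dotProduct, hd, ← hc]
  have hne2 : Real.cos θ - f t ≠ 0 := ne_of_gt hpos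
  have hne3 : f t - Real.cos θ ≠ 0 := sub_ne_zero.mpr (ne_of_lt (hcon t))
  field_simp
  have h4 : (α * f t - α * Real.cos θ)⁻¹ * (α * (f t - Real.cos θ)) = 1 := by
    rw [show α * f t - α * Real.cos θ = α * (f t - Real.cos θ) by ring]
    exact inv_mul_cancel₀ (mul_ne_zero hα.ne' hne3)
  linear_combination (-c) * h4
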